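/- Let (N_k) be a sequence of positive integers. For each k, let H_k, A_k and P_k be real symmetric positive definite N_k × N_k matrices and let A*_k be an arbitrary real N_k × N_k matrix. Assume: (i) there exists c > 0, independent of k, with vᵀ A_k v ≥ c · vᵀ H_k v for every v ∈ ℝ^{N_k}; (ii) there exist constants 0 < δ ≤ Δ, independent of k, such that every eigenvalue of P_k⁻¹ A_k lies in the interval [δ, Δ]; (iii) ‖H_k^{-1/2} (A_k − A*_k) H_k^{-1/2}‖ → 0 as k → ∞. Then sup over μ in the complex spectrum of P_k⁻¹ A*_k of inf over λ in the (real) spectrum of P_k⁻¹ A_k of |λ − μ| tends to 0 as k → ∞. -/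

import Mathlib

open scoped Matrix.Norms.L2Operator
open Matrix Filter

section Helpers
variable {n : Type*} [Fintype n] [DecidableEq n]

private lemma l2_opNorm_le_of_bound' {𝕜 : Type*} [RCLike 𝕜] (M : Matrix n n 𝕜) {C : ℝ}
    (hC : 0 ≤ C)
    (h : ∀ x : EuclideanSpace 𝕜 n, ‖(EuclideanSpace.equiv n 𝕜).symm (M *ᵥ x)‖ ≤ C * ‖x‖) :
    ‖M‖ ≤ C := by
  rw [Matrix.l2_opNorm_def]
  exact ContinuousLinearMap.opNorm_le_bound _ hC h

private lemma euclid_norm_sq' (x : EuclideanSpace ℝ n) : ‖x‖ ^ 2 = ∑ i, x i ^ 2 := by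
  rw [EuclideanSpace.norm_eq, Real.sq_sqrt (by positivity)]
  simp [sq_abs]

private lemma euclid_norm_sq_c' (x : EuclideanSpace ℂ n) :
    ‖x‖ ^ 2 = ∑ i, ‖x i‖ ^ 2 := by
  rw [EuclideanSpace.norm_eq, Real.sq_sqrt (by positivity)]

private lemma euclid_norm_sq_dot (x : EuclideanSpace ℝ n) : ‖x‖ ^ 2 = x ⬝ᵥ x := by
  rw [euclid_norm_sq']
  simp [dotProduct, sq]

private lemma map_mulVec_complex' (M : Matrix n n ℝ) (v : n → ℂ) (j : n) :
    (M.map (fun x : ℝ => (x : ℂ)) *ᵥ v) j =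
      ((M *ᵥ fun i => (v i).re) j : ℝ) + ((M *ᵥ fun i => (v i).im) j : ℝ) * Complex.I := by
  simp only [mulVec, dotProduct, map_apply]
  apply Complex.ext <;> push_cast <;>
    simp [Complex.re_sum, Complex.im_sum, Finset.mul_sum]

private lemma norm_map_complex_le' (M : Matrix n n ℝ) :
    ‖M.map (fun x : ℝ => (x : ℂ))‖ ≤ ‖M‖ := by
  apply l2_opNorm_le_of_bound' _ (norm_nonneg M)
  intro v
  set x : EuclideanSpace ℝ n := WithLp.toLp 2 (fun i => (v i).re) with hx
  set y : EuclideanSpace ℝ n := WithLp.toLp 2 (fun i => (v i).im) with hy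
  have hMx := M.l2_opNorm_mulVec x
  have hMy := M.l2_opNorm_mulVec y
  have key : ‖(EuclideanSpace.equiv n ℂ).symm (M.map (fun x : ℝ => (x : ℂ)) *ᵥ v)‖ ^ 2 ≤
      (‖M‖ * ‖v‖) ^ 2 := by
    have h1 : ‖(EuclideanSpace.equiv n ℂ).symm (M.map (fun x : ℝ => (x : ℂ)) *ᵥ v)‖ ^ 2 =
        ‖(EuclideanSpace.equiv n ℝ).symm (M *ᵥ x)‖ ^ 2 +
        ‖(EuclideanSpace.equiv n ℝ).symm (M *ᵥ y)‖ ^ 2 := by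
      rw [euclid_norm_sq_c', euclid_norm_sq', euclid_norm_sq', ← Finset.sum_add_distrib]
      refine Finset.sum_congr rfl fun j _ => ?_
      rw [show ((EuclideanSpace.equiv n ℂ).symm (M.map (fun x : ℝ => (x : ℂ)) *ᵥ v)) j
          = (M.map (fun x : ℝ => (x : ℂ)) *ᵥ v) j from rfl, map_mulVec_complex' M v j]
      rw [show ((M *ᵥ x) j : ℂ) + ((M *ᵥ y) j : ℂ) * Complex.I
          = Complex.mk ((M *ᵥ x) j) ((M *ᵥ y) j) by apply Complex.ext <;> simp]
      rw [Complex.sq_norm, Complex.normSq_mk]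
      show _ = (M *ᵥ x) j ^ 2 + (M *ᵥ y) j ^ 2
      ring
    have h2 : ‖v‖ ^ 2 = ‖x‖ ^ 2 + ‖y‖ ^ 2 := by
      rw [euclid_norm_sq_c', euclid_norm_sq', euclid_norm_sq', ← Finset.sum_add_distrib]
      refine Finset.sum_congr rfl fun j _ => ?_
      rw [Complex.sq_norm, Complex.normSq_apply]
      show _ = x j ^ 2 + y j ^ 2
      ring
    rw [h1, mul_pow, h2, mul_add]
    gcongr
    · calc ‖(EuclideanSpace.equiv n ℝ).symm (M *ᵥ x)‖ ^ 2 ≤ (‖M‖ * ‖x‖) ^ 2 := by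
            apply sq_le_sq'
              (by linarith [norm_nonneg ((EuclideanSpace.equiv n ℝ).symm (M *ᵥ x))]) hMx
        _ = ‖M‖ ^2 * ‖x‖ ^2 := by ring
    · calc ‖(EuclideanSpace.equiv n ℝ).symm (M *ᵥ y)‖ ^ 2 ≤ (‖M‖ * ‖y‖) ^ 2 := by
            apply sq_le_sq'
              (by linarith [norm_nonneg ((EuclideanSpace.equiv n ℝ).symm (M *ᵥ y))]) hMy
        _ = ‖M‖ ^2 * ‖y‖ ^2 := by ring
  exact (pow_le_pow_iff_left₀ (norm_nonneg _) (by positivity) two_ne_zero).mp key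

private lemma l2_opNorm_diagonal_le' (d : n → ℂ) {C : ℝ} (hC : 0 ≤ C)
    (h : ∀ i, ‖d i‖ ≤ C) : ‖diagonal d‖ ≤ C := by
  apply l2_opNorm_le_of_bound' _ hC
  intro x
  have key : ‖(EuclideanSpace.equiv n ℂ).symm (diagonal d *ᵥ x)‖ ^ 2 ≤ (C * ‖x‖) ^ 2 := by
    rw [euclid_norm_sq_c', mul_pow, euclid_norm_sq_c', Finset.mul_sum]
    apply Finset.sum_le_sum
    intro i _
    have : ((EuclideanSpace.equiv n ℂ).symm (diagonal d *ᵥ x)) i = d i * x i := by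
      show (diagonal d *ᵥ x) i = _
      simp [mulVec_diagonal]
    rw [this, norm_mul, mul_pow]
    gcongr
    exact h i
  exact (pow_le_pow_iff_left₀ (norm_nonneg _) (by positivity) two_ne_zero).mp key

private lemma perturb_spectrum' [Nonempty n] (B E : Matrix n n ℂ) (hB : B.IsHermitian) (μ : ℂ)
    (hμ : μ ∈ spectrum ℂ (B + E)) :
    ∃ i, ‖(hB.eigenvalues i : ℂ) - μ‖ ≤ ‖E‖ := by
  by_contra hcon
  push_neg at hcon
  set d : ℝ := Finset.univ.inf' Finset.univ_nonempty
      (fun i => ‖(hB.eigenvalues i : ℂ) - μ‖) with hd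
  have hEd : ‖E‖ < d := by
    rw [hd, Finset.lt_inf'_iff]
    exact fun i _ => hcon i
  have hd0 : 0 < d := lt_of_le_of_lt (norm_nonneg E) hEd
  have hdle : ∀ i, d ≤ ‖(hB.eigenvalues i : ℂ) - μ‖ := fun i =>
    Finset.inf'_le _ (Finset.mem_univ i)
  have hne : ∀ i, (hB.eigenvalues i : ℂ) - μ ≠ 0 := by
    intro i h0
    have := hdle i
    rw [h0] at this
    simp at this
    linarith
  set U : Matrix.unitaryGroup n ℂ := hB.eigenvectorUnitary with hU
  have hUU : (U : Matrix n n ℂ) * star (U : Matrix n n ℂ) = 1 :=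
    (Matrix.mem_unitaryGroup_iff).mp U.2
  have hUU' : star (U : Matrix n n ℂ) * (U : Matrix n n ℂ) = 1 :=
    (Matrix.mem_unitaryGroup_iff').mp U.2
  set D : Matrix n n ℂ := diagonal (fun i => (hB.eigenvalues i : ℂ) - μ) with hD
  set D' : Matrix n n ℂ := diagonal (fun i => ((hB.eigenvalues i : ℂ) - μ)⁻¹) with hD'
  have hBmu : B - μ • 1 = (U : Matrix n n ℂ) * D * star (U : Matrix n n ℂ) := by
    conv_lhs => rw [hB.spectral_theorem, Unitary.conjStarAlgAut_apply]
    have : (μ • 1 : Matrix n n ℂ) = (U : Matrix n n ℂ) * (μ • 1) * star (U : Matrix n n ℂ) := by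
      rw [mul_smul_comm, mul_one, smul_mul_assoc, hUU]
    rw [this, ← hU, ← sub_mul, ← mul_sub]
    congr 2
    rw [hD, smul_eq_diagonal_mul]
    simp [diagonal_sub, Function.comp]
  set R : Matrix n n ℂ := (U : Matrix n n ℂ) * D' * star (U : Matrix n n ℂ) with hR
  have hDD' : D * D' = 1 := by
    rw [hD, hD', diagonal_mul_diagonal,
      show (fun i => ((hB.eigenvalues i : ℂ) - μ) * ((hB.eigenvalues i : ℂ) - μ)⁻¹) = fun _ => 1
        from funext fun i => mul_inv_cancel₀ (hne i), diagonal_one]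
  have hD'D : D' * D = 1 := by
    rw [hD', hD, diagonal_mul_diagonal,
      show (fun i => ((hB.eigenvalues i : ℂ) - μ)⁻¹ * ((hB.eigenvalues i : ℂ) - μ)) = fun _ => 1
        from funext fun i => inv_mul_cancel₀ (hne i), diagonal_one]
  have hBR : (B - μ • 1) * R = 1 := by
    rw [hBmu, hR]
    calc (U : Matrix n n ℂ) * D * star (U : Matrix n n ℂ) *
          ((U : Matrix n n ℂ) * D' * star (U : Matrix n n ℂ))
        = (U : Matrix n n ℂ) * D * (star (U : Matrix n n ℂ) * (U : Matrix n n ℂ)) * D' *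
          star (U : Matrix n n ℂ) := by
          simp only [mul_assoc]
      _ = 1 := by
          rw [hUU']
          simp only [mul_one]
          rw [mul_assoc (U:Matrix n n ℂ) D D', hDD', mul_one, hUU]
  have hRB : R * (B - μ • 1) = 1 := by
    rw [hBmu, hR]
    calc (U : Matrix n n ℂ) * D' * star (U : Matrix n n ℂ) *
          ((U : Matrix n n ℂ) * D * star (U : Matrix n n ℂ))
        = (U : Matrix n n ℂ) * D' * (star (U : Matrix n n ℂ) * (U : Matrix n n ℂ)) * D *
          star (U : Matrix n n ℂ) := by
          simp only [mul_assoc]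
      _ = 1 := by
          rw [hUU']
          simp only [mul_one]
          rw [mul_assoc (U:Matrix n n ℂ) D' D, hD'D, mul_one, hUU]
  have hRnorm : ‖R‖ ≤ d⁻¹ := by
    have e1 : ‖R‖ = ‖D'‖ := by
      rw [hR, mul_assoc, CStarRing.norm_coe_unitary_mul U (D' * star (U : Matrix n n ℂ)),
        ← Unitary.coe_star, CStarRing.norm_mul_coe_unitary D' (star U)]
    rw [e1, hD']
    apply l2_opNorm_diagonal_le' _ (by positivity)
    intro i
    rw [norm_inv]
    exact inv_anti₀ hd0 (hdle i)
  have hRE : ‖R * E‖ < 1 := by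
    calc ‖R * E‖ ≤ ‖R‖ * ‖E‖ := Matrix.l2_opNorm_mul R E
      _ ≤ d⁻¹ * ‖E‖ := by gcongr
      _ < 1 := by
          rw [inv_mul_lt_iff₀ hd0, mul_one]
          exact hEd
  haveI : CompleteSpace (Matrix n n ℂ) := FiniteDimensional.complete ℂ _
  have hunit1 : IsUnit (1 + R * E) := by
    have := isUnit_one_sub_of_norm_lt_one (x := -(R * E)) (by rwa [norm_neg])
    rwa [sub_neg_eq_add] at this
  have hunitB : IsUnit (B - μ • 1) := ⟨⟨B - μ • 1, R, hBR, hRB⟩, rfl⟩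
  have hfact : B + E - μ • 1 = (B - μ • 1) * (1 + R * E) := by
    rw [mul_add, mul_one, ← mul_assoc, hBR, one_mul]
    abel
  have hIsU : IsUnit (B + E - μ • 1) := by
    rw [hfact]; exact hunitB.mul hunit1
  rw [spectrum.mem_iff] at hμ
  apply hμ
  rw [Algebra.algebraMap_eq_smul_one]
  have h2 : IsUnit (-(B + E - μ • 1)) := hIsU.neg
  rwa [neg_sub] at h2

private lemma conj_spectrum' {R : Type*} [CommRing R] {𝕜 : Type*} [Field 𝕜]
    [Algebra R (Matrix n n 𝕜)] (a s t : Matrix n n 𝕜) (h1 : s * t = 1) (h2 : t * s = 1) :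
    spectrum R (t * a * s) = spectrum R a :=
  spectrum.units_conjugate' (u := ⟨s, t, h1, h2⟩)

private lemma sub_map_complex' (X : Matrix n n ℝ) (x : ℝ) :
    algebraMap ℂ (Matrix n n ℂ) (x : ℂ) - X.map (fun t : ℝ => (t : ℂ)) =
      (algebraMap ℝ (Matrix n n ℝ) x - X).map (fun t : ℝ => (t : ℂ)) := by
  ext i j
  by_cases h : i = j <;>
    simp [Matrix.algebraMap_matrix_apply, Matrix.map_apply, Matrix.sub_apply, h]

private lemma mem_spectrum_map_iff' (M : Matrix n n ℝ) (x : ℝ) :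
    (x : ℂ) ∈ spectrum ℂ (M.map (fun t : ℝ => (t : ℂ))) ↔ x ∈ spectrum ℝ M := by
  rw [spectrum.mem_iff, spectrum.mem_iff, not_iff_not, sub_map_complex']
  rw [Matrix.isUnit_iff_isUnit_det, Matrix.isUnit_iff_isUnit_det]
  have : ((algebraMap ℝ (Matrix n n ℝ) x - M).map (fun t : ℝ => (t : ℂ))).det
      = ((algebraMap ℝ (Matrix n n ℝ) x - M).det : ℂ) := by
    have h := RingHom.map_det Complex.ofRealHom (algebraMap ℝ (Matrix n n ℝ) x - M)
    rw [RingHom.mapMatrix_apply] at h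
    exact h.symm
  rw [this, isUnit_iff_ne_zero, isUnit_iff_ne_zero, ne_eq, ne_eq, Complex.ofReal_eq_zero]

private lemma isHermitian_map_complex' {M : Matrix n n ℝ} (hM : M.IsHermitian) :
    (M.map (fun t : ℝ => (t : ℂ))).IsHermitian := by
  have h := hM
  unfold Matrix.IsHermitian at h ⊢
  ext i j
  have := congrFun (congrFun h i) j
  simp only [conjTranspose_apply, map_apply] at this ⊢
  rw [← this]
  simp

private lemma map_mul_complex (X Y : Matrix n n ℝ) :
    (X * Y).map (fun t : ℝ => (t : ℂ)) =
      X.map (fun t : ℝ => (t : ℂ)) * Y.map (fun t : ℝ => (t : ℂ)) := by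
  ext i j
  simp [Matrix.mul_apply]

private lemma map_one_complex :
    ((1 : Matrix n n ℝ)).map (fun t : ℝ => (t : ℂ)) = 1 := by
  ext i j
  by_cases h : i = j <;> simp [Matrix.one_apply, h]

private lemma map_add_complex (X Y : Matrix n n ℝ) :
    (X + Y).map (fun t : ℝ => (t : ℂ)) =
      X.map (fun t : ℝ => (t : ℂ)) + Y.map (fun t : ℝ => (t : ℂ)) := by
  ext i j
  simp

private lemma quadratic_le' (B : Matrix n n ℝ) (hB : B.IsHermitian) (Δ : ℝ)
    (h : ∀ i, hB.eigenvalues i ≤ Δ) (v : n → ℝ) :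
    v ⬝ᵥ B *ᵥ v ≤ Δ * (v ⬝ᵥ v) := by
  set U : Matrix n n ℝ := (hB.eigenvectorUnitary : Matrix n n ℝ) with hU
  have hUU : U * star U = 1 := (Matrix.mem_unitaryGroup_iff).mp hB.eigenvectorUnitary.2
  set w : n → ℝ := star U *ᵥ v with hw
  have hstar : star U = Uᵀ := by
    ext i j; simp [star]
  have key : v ⬝ᵥ B *ᵥ v = w ⬝ᵥ (diagonal (RCLike.ofReal ∘ hB.eigenvalues) *ᵥ w) := by
    conv_lhs => rw [hB.spectral_theorem, Unitary.conjStarAlgAut_apply]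
    rw [← hU, ← mulVec_mulVec, ← mulVec_mulVec, ← hw]
    rw [Matrix.dotProduct_mulVec v U, ← Matrix.mulVec_transpose, ← hstar, ← hw]
  have hww : w ⬝ᵥ w = v ⬝ᵥ v := by
    rw [hw, hstar]
    rw [show (Uᵀ *ᵥ v) ⬝ᵥ (Uᵀ *ᵥ v) = (v ᵥ* U) ⬝ᵥ (Uᵀ *ᵥ v) by rw [Matrix.mulVec_transpose]]
    rw [← Matrix.dotProduct_mulVec, Matrix.mulVec_mulVec, ← hstar, hUU, Matrix.one_mulVec]
  rw [key, ← hww]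
  have : w ⬝ᵥ (diagonal (RCLike.ofReal ∘ hB.eigenvalues) *ᵥ w)
      = ∑ i, hB.eigenvalues i * w i ^ 2 := by
    simp only [dotProduct, mulVec_diagonal]
    refine Finset.sum_congr rfl fun i _ => ?_
    simp [RCLike.ofReal]
    ring
  rw [this]
  simp only [dotProduct, Finset.mul_sum]
  apply Finset.sum_le_sum
  intro i _
  nlinarith [sq_nonneg (w i), h i]

private lemma cfc_sqrt_herm' {M : Matrix n n ℝ} (hM : M.PosDef) :
    (hM.isHermitian.cfc Real.sqrt).IsHermitian := by
  rw [← hM.isHermitian.cfc_eq]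
  exact (cfc_predicate Real.sqrt M : IsSelfAdjoint _)

private lemma cfc_sqrt_mul' {M : Matrix n n ℝ} (hM : M.PosDef) :
    hM.isHermitian.cfc Real.sqrt * hM.isHermitian.cfc Real.sqrt = M := by
  rw [← hM.isHermitian.cfc_eq, ← cfc_mul Real.sqrt Real.sqrt M]
  conv_rhs => rw [← cfc_id ℝ M (hM.isHermitian : IsSelfAdjoint M)]
  apply cfc_congr
  intro x hx
  rw [hM.isHermitian.spectrum_real_eq_range_eigenvalues] at hx
  obtain ⟨i, rfl⟩ := hx
  exact Real.mul_self_sqrt (hM.eigenvalues_pos i).le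

end Helpers

section Key
variable {n : Type*} [Fintype n] [DecidableEq n]

set_option maxHeartbeats 2000000 in
private lemma key_bound [Nonempty n]
    (H A P Astar Sp Sh : Matrix n n ℝ) (hH : H.PosDef) (hA : A.PosDef) (hP : P.PosDef)
    (hSp_herm : Sp.IsHermitian) (hSh_herm : Sh.IsHermitian)
    (hSpSp : Sp * Sp = P) (hShSh : Sh * Sh = H)
    (c : ℝ) (hc : 0 < c) (coer : ∀ v : n → ℝ, c * (v ⬝ᵥ H.mulVec v) ≤ v ⬝ᵥ A.mulVec v)
    (δ Δ : ℝ) (hδ : 0 < δ) (hδΔ : δ ≤ Δ)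
    (heig : spectrum ℂ ((P⁻¹ * A).map (fun x : ℝ => (x : ℂ))) ⊆
      (fun x : ℝ => (x : ℂ)) '' Set.Icc δ Δ)
    {μ : ℂ} (hμ : μ ∈ spectrum ℂ ((P⁻¹ * Astar).map (fun x : ℝ => (x : ℂ)))) :
    ∃ l ∈ spectrum ℝ (P⁻¹ * A), ‖(l : ℂ) - μ‖ ≤
      (Δ / c) * ‖Sh⁻¹ * (A - Astar) * Sh⁻¹‖ := by
  have hSpdet : IsUnit Sp.det := by
    have h1 : Sp.det * Sp.det = P.det := by rw [← det_mul, hSpSp]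
    have h2 : (0:ℝ) < P.det := hP.det_pos
    refine isUnit_iff_ne_zero.mpr fun h0 => ?_
    rw [h0, mul_zero] at h1; linarith
  have hShdet : IsUnit Sh.det := by
    have h1 : Sh.det * Sh.det = H.det := by rw [← det_mul, hShSh]
    have h2 : (0:ℝ) < H.det := hH.det_pos
    refine isUnit_iff_ne_zero.mpr fun h0 => ?_
    rw [h0, mul_zero] at h1; linarith
  have hSpi : Sp * Sp⁻¹ = 1 := mul_nonsing_inv _ hSpdet
  have hiSp : Sp⁻¹ * Sp = 1 := nonsing_inv_mul _ hSpdet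
  have hShi : Sh * Sh⁻¹ = 1 := mul_nonsing_inv _ hShdet
  have hiSh : Sh⁻¹ * Sh = 1 := nonsing_inv_mul _ hShdet
  have hSpi_herm : (Sp⁻¹).IsHermitian := hSp_herm.inv
  -- the symmetrized matrices
  set B : Matrix n n ℝ := Sp⁻¹ * A * Sp⁻¹ with hBdef
  set E : Matrix n n ℝ := Sp⁻¹ * (Astar - A) * Sp⁻¹ with hEdef
  have hBherm : B.IsHermitian := by
    have := Matrix.isHermitian_mul_mul_conjTranspose (Sp⁻¹) hA.isHermitian
    rwa [hSpi_herm.eq] at this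
  -- similarity identity
  have ident : ∀ M : Matrix n n ℝ, P⁻¹ * M = Sp⁻¹ * (Sp⁻¹ * M * Sp⁻¹) * Sp := by
    intro M
    rw [← hSpSp, Matrix.mul_inv_rev]
    have h : Sp⁻¹ * (Sp⁻¹ * M * Sp⁻¹) * Sp = Sp⁻¹ * Sp⁻¹ * M * (Sp⁻¹ * Sp) := by
      simp only [mul_assoc]
    rw [h, hiSp, mul_one]
  have hspecR : spectrum ℝ (P⁻¹ * A) = spectrum ℝ B := by
    rw [ident A]
    exact conj_spectrum' B Sp Sp⁻¹ hSpi hiSp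
  have hspecCA : spectrum ℂ ((P⁻¹ * A).map (fun x : ℝ => (x : ℂ)))
      = spectrum ℂ (B.map (fun x : ℝ => (x : ℂ))) := by
    rw [ident A, map_mul_complex, map_mul_complex]
    refine conj_spectrum' _ _ _ ?_ ?_
    · rw [← map_mul_complex, hSpi, map_one_complex]
    · rw [← map_mul_complex, hiSp, map_one_complex]
  have hspecCAs : spectrum ℂ ((P⁻¹ * Astar).map (fun x : ℝ => (x : ℂ)))
      = spectrum ℂ ((Sp⁻¹ * Astar * Sp⁻¹).map (fun x : ℝ => (x : ℂ))) := by
    rw [ident Astar, map_mul_complex, map_mul_complex]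
    refine conj_spectrum' _ _ _ ?_ ?_
    · rw [← map_mul_complex, hSpi, map_one_complex]
    · rw [← map_mul_complex, hiSp, map_one_complex]
  -- eigenvalue bounds for B
  have eigB_mem : ∀ i, hBherm.eigenvalues i ∈ Set.Icc δ Δ := by
    intro i
    have h1 : hBherm.eigenvalues i ∈ spectrum ℝ B :=
      hBherm.eigenvalues_mem_spectrum_real i
    have h2 : ((hBherm.eigenvalues i : ℝ) : ℂ) ∈
        spectrum ℂ (B.map (fun x : ℝ => (x : ℂ))) :=
      (mem_spectrum_map_iff' B _).mpr h1
    rw [← hspecCA] at h2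
    obtain ⟨x, hx, hxe⟩ := heig h2
    have hxe' : (x : ℂ) = ((hBherm.eigenvalues i : ℝ) : ℂ) := hxe
    have : x = hBherm.eigenvalues i := by exact_mod_cast hxe'
    rwa [← this]
  have quad : ∀ v : n → ℝ, v ⬝ᵥ B *ᵥ v ≤ Δ * (v ⬝ᵥ v) :=
    quadratic_le' B hBherm Δ (fun i => (eigB_mem i).2)
  have hΔpos : (0:ℝ) < Δ := lt_of_lt_of_le hδ hδΔ
  have hΔc : (0:ℝ) ≤ Δ / c := le_of_lt (div_pos hΔpos hc)
  -- norm bound on Sh * Sp⁻¹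
  have normBound : ‖Sh * Sp⁻¹‖ ≤ Real.sqrt (Δ / c) := by
    apply l2_opNorm_le_of_bound' _ (Real.sqrt_nonneg _)
    intro x
    have key : ‖(EuclideanSpace.equiv n ℝ).symm ((Sh * Sp⁻¹) *ᵥ x)‖ ^ 2 ≤
        (Real.sqrt (Δ / c) * ‖x‖) ^ 2 := by
      rw [euclid_norm_sq_dot]
      set y : n → ℝ := Sp⁻¹ *ᵥ x with hy
      have hz : ((EuclideanSpace.equiv n ℝ).symm ((Sh * Sp⁻¹) *ᵥ x) : n → ℝ)
          = Sh *ᵥ y := by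
        rw [hy, mulVec_mulVec]
        rfl
      have e1 : ((EuclideanSpace.equiv n ℝ).symm ((Sh * Sp⁻¹) *ᵥ x)) ⬝ᵥ
          ((EuclideanSpace.equiv n ℝ).symm ((Sh * Sp⁻¹) *ᵥ x)) = y ⬝ᵥ H *ᵥ y := by
        rw [hz]
        calc (Sh *ᵥ y) ⬝ᵥ (Sh *ᵥ y) = (y ᵥ* Sh) ⬝ᵥ (Sh *ᵥ y) := by
              rw [← Matrix.mulVec_transpose, ← Matrix.conjTranspose_eq_transpose_of_trivial,
                hSh_herm.eq]
          _ = y ⬝ᵥ (Sh *ᵥ (Sh *ᵥ y)) := by rw [← Matrix.dotProduct_mulVec]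
          _ = y ⬝ᵥ H *ᵥ y := by rw [mulVec_mulVec, hShSh]
      have e2 : y ⬝ᵥ A *ᵥ y = x ⬝ᵥ B *ᵥ x := by
        rw [hBdef, hy]
        calc (Sp⁻¹ *ᵥ x) ⬝ᵥ A *ᵥ (Sp⁻¹ *ᵥ x)
            = (x ᵥ* Sp⁻¹) ⬝ᵥ (A *ᵥ (Sp⁻¹ *ᵥ x)) := by
              rw [← Matrix.mulVec_transpose, ← Matrix.conjTranspose_eq_transpose_of_trivial,
                hSpi_herm.eq]
          _ = x ⬝ᵥ (Sp⁻¹ *ᵥ (A *ᵥ (Sp⁻¹ *ᵥ x))) := by rw [← Matrix.dotProduct_mulVec]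
          _ = x ⬝ᵥ (Sp⁻¹ * A * Sp⁻¹) *ᵥ x := by rw [mulVec_mulVec, mulVec_mulVec]
      have e3 : y ⬝ᵥ H *ᵥ y ≤ (Δ / c) * (x ⬝ᵥ x) := by
        have h1 := coer y
        have h2 := quad x
        have h3 : y ⬝ᵥ H *ᵥ y ≤ (1 / c) * (y ⬝ᵥ A *ᵥ y) := by
          rw [div_mul_eq_mul_div, le_div_iff₀ hc]
          linarith
        rw [e2] at h3
        calc y ⬝ᵥ H *ᵥ y ≤ (1 / c) * (x ⬝ᵥ B *ᵥ x) := h3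
          _ ≤ (1 / c) * (Δ * (x ⬝ᵥ x)) := by
              apply mul_le_mul_of_nonneg_left h2 (by positivity)
          _ = (Δ / c) * (x ⬝ᵥ x) := by ring
      rw [e1]
      calc y ⬝ᵥ H *ᵥ y ≤ (Δ / c) * (x ⬝ᵥ x) := e3
        _ = (Real.sqrt (Δ / c) * ‖x‖) ^ 2 := by
            rw [mul_pow, Real.sq_sqrt hΔc, ← euclid_norm_sq_dot]
    exact (pow_le_pow_iff_left₀ (norm_nonneg _) (by positivity) two_ne_zero).mp key
  have normBound2 : ‖Sp⁻¹ * Sh‖ ≤ Real.sqrt (Δ / c) := by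
    have : (Sp⁻¹ * Sh)ᴴ = Sh * Sp⁻¹ := by
      rw [conjTranspose_mul, hSh_herm.eq, hSpi_herm.eq]
    calc ‖Sp⁻¹ * Sh‖ = ‖(Sp⁻¹ * Sh)ᴴ‖ := (Matrix.l2_opNorm_conjTranspose _).symm
      _ = ‖Sh * Sp⁻¹‖ := by rw [this]
      _ ≤ Real.sqrt (Δ / c) := normBound
  -- bound on ‖E‖
  set ε : ℝ := ‖Sh⁻¹ * (A - Astar) * Sh⁻¹‖ with hεdef
  have Ebound : ‖E‖ ≤ (Δ / c) * ε := by
    have hE2 : E = -((Sp⁻¹ * Sh) * (Sh⁻¹ * (A - Astar) * Sh⁻¹) * (Sh * Sp⁻¹)) := by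
      rw [hEdef]
      have : (Sp⁻¹ * Sh) * (Sh⁻¹ * (A - Astar) * Sh⁻¹) * (Sh * Sp⁻¹)
          = Sp⁻¹ * ((Sh * Sh⁻¹) * (A - Astar) * (Sh⁻¹ * Sh)) * Sp⁻¹ := by
        simp only [mul_assoc]
      rw [this, hShi, hiSh, one_mul, mul_one, ← neg_mul, ← mul_neg, neg_sub]
    rw [hE2, norm_neg]
    calc ‖(Sp⁻¹ * Sh) * (Sh⁻¹ * (A - Astar) * Sh⁻¹) * (Sh * Sp⁻¹)‖
        ≤ ‖(Sp⁻¹ * Sh) * (Sh⁻¹ * (A - Astar) * Sh⁻¹)‖ * ‖Sh * Sp⁻¹‖ :=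
          Matrix.l2_opNorm_mul _ _
      _ ≤ ‖Sp⁻¹ * Sh‖ * ‖Sh⁻¹ * (A - Astar) * Sh⁻¹‖ * ‖Sh * Sp⁻¹‖ :=
          mul_le_mul_of_nonneg_right (Matrix.l2_opNorm_mul _ _) (norm_nonneg _)
      _ ≤ Real.sqrt (Δ / c) * ε * Real.sqrt (Δ / c) :=
          mul_le_mul (mul_le_mul_of_nonneg_right normBound2 (norm_nonneg _)) normBound
            (norm_nonneg _) (mul_nonneg (Real.sqrt_nonneg _) (norm_nonneg _))
      _ = Real.sqrt (Δ / c) * Real.sqrt (Δ / c) * ε := by ring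
      _ = (Δ / c) * ε := by rw [Real.mul_self_sqrt hΔc]
  -- use the perturbation lemma on the complexified matrices
  have hBE : (Sp⁻¹ * Astar * Sp⁻¹ : Matrix n n ℝ) = B + E := by
    rw [hBdef, hEdef]
    rw [← add_mul, ← mul_add]
    congr 2
    abel
  have hBmapHerm : (B.map (fun x : ℝ => (x : ℂ))).IsHermitian :=
    isHermitian_map_complex' hBherm
  rw [hspecCAs, hBE, map_add_complex] at hμ
  obtain ⟨i, hi⟩ := perturb_spectrum' _ _ hBmapHerm μ hμ
  refine ⟨hBmapHerm.eigenvalues i, ?_, ?_⟩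
  · have h1 : hBmapHerm.eigenvalues i ∈ spectrum ℝ (B.map (fun x : ℝ => (x : ℂ))) :=
      hBmapHerm.eigenvalues_mem_spectrum_real i
    have h2 : ((hBmapHerm.eigenvalues i : ℝ) : ℂ) ∈
        spectrum ℂ (B.map (fun x : ℝ => (x : ℂ))) := by
      have := spectrum.algebraMap_mem_iff (S := ℂ)
        (a := B.map (fun x : ℝ => (x : ℂ))) (r := hBmapHerm.eigenvalues i)
      exact this.mpr h1
    rw [hspecR]
    exact (mem_spectrum_map_iff' B _).mp h2
  · calc ‖(hBmapHerm.eigenvalues i : ℂ) - μ‖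
        ≤ ‖E.map (fun x : ℝ => (x : ℂ))‖ := hi
      _ ≤ ‖E‖ := norm_map_complex_le' E
      _ ≤ (Δ / c) * ε := Ebound

end Key

/-- Proposition 2 of the paper, in matrix form. If `P k` is a uniformly robust symmetric
positive definite preconditioner for the symmetric positive definite matrices `A k`
(i.e. the eigenvalues of `Pₖ⁻¹Aₖ` lie in `[δ, Δ]` with `0 < δ ≤ Δ` independent of `k`),
the bilinear form of `A k` is uniformly coercive with respect to the norm represented by
`H k`, and `‖Hₖ^{-1/2}(Aₖ - A*ₖ)Hₖ^{-1/2}‖ → 0`, then the distance from the complex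
spectrum of `Pₖ⁻¹A*ₖ` to the (real) spectrum of `Pₖ⁻¹Aₖ` tends to zero. -/

theorem preconditioned_spectral_convergence
    (N : ℕ → ℕ) (hN : ∀ k, 0 < N k)
    (H A P Astar : ∀ k, Matrix (Fin (N k)) (Fin (N k)) ℝ)
    (hH : ∀ k, (H k).PosDef) (hA : ∀ k, (A k).PosDef) (hP : ∀ k, (P k).PosDef)
    (c : ℝ) (hc : 0 < c)
    (coer : ∀ k (v : Fin (N k) → ℝ),
      c * (v ⬝ᵥ (H k).mulVec v) ≤ v ⬝ᵥ (A k).mulVec v)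
    (δ Δ : ℝ) (hδ : 0 < δ) (hδΔ : δ ≤ Δ)
    (heig : ∀ k, spectrum ℂ (((P k)⁻¹ * A k).map (fun x : ℝ => (x : ℂ))) ⊆
      (fun x : ℝ => (x : ℂ)) '' Set.Icc δ Δ)
    (hconv : Tendsto (fun k =>
        ‖((hH k).isHermitian.cfc Real.sqrt)⁻¹ * (A k - Astar k) * ((hH k).isHermitian.cfc Real.sqrt)⁻¹‖)
      atTop (nhds 0)) :
    Tendsto (fun k =>
      sSup ((fun μ : ℂ =>
          sInf ((fun l : ℝ => ‖(l : ℂ) - μ‖) ''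
            spectrum ℝ ((P k)⁻¹ * A k))) ''
        spectrum ℂ (((P k)⁻¹ * Astar k).map (fun x : ℝ => (x : ℂ))))) atTop (nhds 0) := by
  have hΔc : (0:ℝ) ≤ Δ / c := div_nonneg (le_of_lt (lt_of_lt_of_le hδ hδΔ)) hc.le
  apply tendsto_of_tendsto_of_tendsto_of_le_of_le (g := fun _ : ℕ => (0:ℝ))
    (h := fun k => (Δ / c) *
      ‖((hH k).isHermitian.cfc Real.sqrt)⁻¹ * (A k - Astar k) * ((hH k).isHermitian.cfc Real.sqrt)⁻¹‖)
    tendsto_const_nhds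
  · have := hconv.const_mul (Δ / c)
    simpa using this
  · intro k
    apply Real.sSup_nonneg
    rintro x ⟨μ, hμ, rfl⟩
    apply Real.sInf_nonneg
    rintro y ⟨l, hl, rfl⟩
    exact norm_nonneg _
  · intro k
    apply Real.sSup_le
    · rintro x ⟨μ, hμ, rfl⟩
      haveI : Nonempty (Fin (N k)) := Fin.pos_iff_nonempty.mp (hN k)
      obtain ⟨l, hl, hle⟩ := key_bound (H k) (A k) (P k) (Astar k)
        ((hP k).isHermitian.cfc Real.sqrt) ((hH k).isHermitian.cfc Real.sqrt) (hH k) (hA k) (hP k)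
        (cfc_sqrt_herm' (hP k)) (cfc_sqrt_herm' (hH k))
        (cfc_sqrt_mul' (hP k)) (cfc_sqrt_mul' (hH k))
        c hc (coer k) δ Δ hδ hδΔ (heig k) hμ
      refine le_trans (csInf_le ⟨0, ?_⟩ ⟨l, hl, rfl⟩) hle
      rintro y ⟨l', hl', rfl⟩
      exact norm_nonneg _
    · positivity
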